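/- Let λ > 1 be a real number and k a positive integer. Then limsup_{n→∞} (1/n) log log(⌊λ^{kn}⌋!) = k log λ. -/

import Mathlib

open Filter

private lemma aux_two_pow_le_factorial (n : ℕ) : 2 ^ (n - 1) ≤ n.factorial := by
  induction n with
  | zero => simp
  | succ m ih =>
    cases m with
    | zero => simp [Nat.factorial]
    | succ p =>
      have h1 : 2 ^ (p + 1 + 1 - 1) = 2 * 2 ^ (p + 1 - 1) := by
        simp [pow_succ, Nat.mul_comm]
      rw [h1, Nat.factorial_succ]
      exact Nat.mul_le_mul (by omega) ih

/-- For a real number `λ > 1` and a positive integer `k`,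
`limsup_{n→∞} (1/n) · log log(⌊λ^{kn}⌋!) = k · log λ`. -/
theorem limsup_loglog_factorial_floor_pow
    (lam : ℝ) (hlam : 1 < lam) (k : ℕ) (hk : 0 < k) :
    atTop.limsup (fun n : ℕ =>
        Real.log (Real.log (Nat.factorial ⌊lam ^ (k * n)⌋₊)) / n) =
      (k : ℝ) * Real.log lam := by
  set L := Real.log lam with hLdef
  have hL0 : 0 < L := Real.log_pos hlam
  have hlam0 : (0:ℝ) < lam := lt_trans one_pos hlam
  have hk' : (0:ℝ) < (k : ℝ) := by exact_mod_cast hk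
  set c : ℝ := Real.log (Real.log 2) - Real.log 2 with hcdef
  -- lower bound sequence tends to k*L
  have hlow : Tendsto (fun n : ℕ => (k : ℝ) * L + c / n) atTop (nhds ((k:ℝ) * L)) := by
    have := tendsto_const_nhds (x := (k:ℝ) * L) (f := atTop (α := ℕ)) |>.add
      (tendsto_const_div_atTop_nhds_zero_nat c)
    simpa using this
  have hlogn : Tendsto (fun n : ℕ => Real.log n / n) atTop (nhds 0) := by
    have h := Real.isLittleO_log_id_atTop.tendsto_div_nhds_zero
    exact h.comp tendsto_natCast_atTop_atTop
  -- upper bound sequence tends to k*L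
  have hupp : Tendsto (fun n : ℕ => (k : ℝ) * L + (Real.log ((k:ℝ) * L) + Real.log n) / n)
      atTop (nhds ((k:ℝ) * L)) := by
    have h1 : Tendsto (fun n : ℕ => Real.log ((k:ℝ) * L) / n + Real.log n / n) atTop
        (nhds (0 + 0)) :=
      (tendsto_const_div_atTop_nhds_zero_nat _).add hlogn
    have h2 := tendsto_const_nhds (x := (k:ℝ) * L) (f := atTop (α := ℕ)) |>.add h1
    simp only [add_zero] at h2
    convert h2 using 2 with n
    rw [add_div]
  -- eventually lam ^ (k*n) ≥ 4
  have hev : ∀ᶠ n : ℕ in atTop, (4:ℝ) ≤ lam ^ (k * n) := by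
    have h4 : ∀ᶠ n : ℕ in atTop, (4:ℝ) ≤ lam ^ n :=
      (tendsto_pow_atTop_atTop_of_one_lt hlam).eventually_ge_atTop 4
    filter_upwards [h4] with n hn
    calc (4:ℝ) ≤ lam ^ n := hn
      _ ≤ lam ^ (k * n) := pow_le_pow_right₀ hlam.le (Nat.le_mul_of_pos_left n hk)
  have key : Tendsto (fun n : ℕ =>
      Real.log (Real.log (Nat.factorial ⌊lam ^ (k * n)⌋₊)) / n) atTop
      (nhds ((k:ℝ) * L)) := by
    apply tendsto_of_tendsto_of_tendsto_of_le_of_le' hlow hupp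
    · -- lower bound eventually
      filter_upwards [hev, eventually_ge_atTop 1] with n h4 hn1
      set N := ⌊lam ^ (k * n)⌋₊ with hNdef
      have hpow0 : (0:ℝ) < lam ^ (k * n) := pow_pos hlam0 _
      have hN4 : 4 ≤ N := Nat.le_floor (by exact_mod_cast h4)
      have hNgt : lam ^ (k * n) - 1 ≤ (N:ℝ) := by
        have := Nat.lt_floor_add_one (lam ^ (k * n))
        push_cast at this ⊢
        linarith
      have hn0 : (0:ℝ) < n := by exact_mod_cast hn1
      have hlog2 : (0:ℝ) < Real.log 2 := Real.log_pos one_lt_two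
      have hNsub2 : lam ^ (k * n) / 2 ≤ (N:ℝ) - 1 := by linarith
      have hNsub0 : (0:ℝ) < (N:ℝ) - 1 := by
        have : (4:ℝ) ≤ (N:ℝ) := by exact_mod_cast hN4
        linarith
      have hcast : ((N - 1 : ℕ):ℝ) = (N:ℝ) - 1 := by
        have h1 : 1 ≤ N := by omega
        push_cast [Nat.cast_sub h1]
        ring
      -- (N-1) log 2 ≤ log N!
      have hlb1 : ((N:ℝ) - 1) * Real.log 2 ≤ Real.log (N.factorial) := by
        have h2 : (2:ℝ) ^ (N - 1) ≤ (N.factorial : ℝ) := by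
          exact_mod_cast aux_two_pow_le_factorial N
        have h3 := Real.log_le_log (by positivity) h2
        rwa [Real.log_pow, hcast] at h3
      have hprodpos : 0 < ((N:ℝ) - 1) * Real.log 2 := mul_pos hNsub0 hlog2
      have hlb3 : Real.log (((N:ℝ) - 1) * Real.log 2) ≤
          Real.log (Real.log (N.factorial)) := Real.log_le_log hprodpos hlb1
      have hlb4 : Real.log (((N:ℝ) - 1) * Real.log 2)
          = Real.log ((N:ℝ) - 1) + Real.log (Real.log 2) :=
        Real.log_mul (ne_of_gt hNsub0) (ne_of_gt hlog2)
      have hlb5 : (k:ℝ) * n * L - Real.log 2 ≤ Real.log ((N:ℝ) - 1) := by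
        have h6 := Real.log_le_log (by positivity : (0:ℝ) < lam ^ (k * n) / 2) hNsub2
        rw [Real.log_div (ne_of_gt hpow0) two_ne_zero, Real.log_pow] at h6
        push_cast at h6
        linarith
      have hmain : (k:ℝ) * n * L + c ≤ Real.log (Real.log (N.factorial)) := by
        rw [hcdef]; linarith
      have : ((k:ℝ) * n * L + c) / n ≤ Real.log (Real.log (N.factorial)) / n := by
        exact div_le_div_of_nonneg_right hmain hn0.le |>.trans_eq rfl
      calc (k:ℝ) * L + c / n = ((k:ℝ) * n * L + c) / n := by
            field_simp
        _ ≤ Real.log (Real.log (N.factorial)) / n := this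
    · -- upper bound eventually
      filter_upwards [hev, eventually_ge_atTop 1] with n h4 hn1
      set N := ⌊lam ^ (k * n)⌋₊ with hNdef
      have hpow0 : (0:ℝ) < lam ^ (k * n) := pow_pos hlam0 _
      have hN4 : 4 ≤ N := Nat.le_floor (by exact_mod_cast h4)
      have hNle : (N:ℝ) ≤ lam ^ (k * n) := Nat.floor_le hpow0.le
      have hn0 : (0:ℝ) < n := by exact_mod_cast hn1
      have hNR : (1:ℝ) < (N:ℝ) := by
        have : (4:ℝ) ≤ (N:ℝ) := by exact_mod_cast hN4
        linarith
      have hfac1 : 1 < N.factorial := by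
        calc 1 < N := by omega
          _ ≤ N.factorial := Nat.self_le_factorial N
      have hlogfac_pos : 0 < Real.log (N.factorial) :=
        Real.log_pos (by exact_mod_cast hfac1)
      have hlogN_pos : 0 < Real.log N := Real.log_pos hNR
      have hlogN_le : Real.log N ≤ (k:ℝ) * n * L := by
        have h5 := Real.log_le_log (by linarith : (0:ℝ) < (N:ℝ)) hNle
        rw [Real.log_pow] at h5
        push_cast at h5
        linarith
      have hub1 : Real.log (N.factorial) ≤ (N:ℝ) * Real.log N := by
        have h1 : ((N.factorial : ℕ):ℝ) ≤ (N:ℝ) ^ N := by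
          exact_mod_cast Nat.factorial_le_pow N
        have h2 := Real.log_le_log (by exact_mod_cast Nat.factorial_pos N) h1
        rwa [Real.log_pow] at h2
      have hub2 : Real.log (Real.log (N.factorial)) ≤
          Real.log ((N:ℝ) * Real.log N) := Real.log_le_log hlogfac_pos hub1
      have hub3 : Real.log ((N:ℝ) * Real.log N)
          = Real.log (N:ℝ) + Real.log (Real.log N) :=
        Real.log_mul (by positivity) (ne_of_gt hlogN_pos)
      have hub4 : Real.log (Real.log N) ≤ Real.log ((k:ℝ) * n * L) :=
        Real.log_le_log hlogN_pos hlogN_le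
      have hub5 : Real.log ((k:ℝ) * n * L) = Real.log ((k:ℝ) * L) + Real.log n := by
        rw [show (k:ℝ) * n * L = ((k:ℝ) * L) * n by ring,
          Real.log_mul (by positivity) (ne_of_gt hn0)]
      have hmain : Real.log (Real.log (N.factorial)) ≤
          (k:ℝ) * n * L + (Real.log ((k:ℝ) * L) + Real.log n) := by linarith
      have hstep : Real.log (Real.log (N.factorial)) / n ≤
          ((k:ℝ) * n * L + (Real.log ((k:ℝ) * L) + Real.log n)) / n :=
        div_le_div_of_nonneg_right hmain hn0.le |>.trans_eq rfl
      calc Real.log (Real.log (N.factorial)) / n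
          ≤ ((k:ℝ) * n * L + (Real.log ((k:ℝ) * L) + Real.log n)) / n := hstep
        _ = (k:ℝ) * L + (Real.log ((k:ℝ) * L) + Real.log n) / n := by
            field_simp
  exact key.limsup_eq
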